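/- Let φ : [0,∞) → [0,∞) be C¹ with φ(0) = 0 and t ↦ φ'(t)/t strictly decreasing on (0,∞). Define f(t) = (a/2)φ'(t)t − aφ(t) for a > 0. Then f(0) = 0 and f is strictly decreasing on (0,∞); in particular f(ρ) < 0 for every ρ > 0. -/

import Mathlib

open Set

/-- Key estimate: for 0 ≤ t < u, comparing φ with the parabola (φ'(u)/u)·s²/2. -/
lemma key_estimate (φ φ' : ℝ → ℝ)
    (hcont : ContinuousOn φ (Ici 0))
    (hderiv : ∀ t : ℝ, 0 < t → HasDerivAt φ (φ' t) t)
    (hanti : StrictAntiOn (fun t => φ' t / t) (Ioi 0))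
    {t u : ℝ} (ht : 0 ≤ t) (htu : t < u) :
    φ t - (φ' u / u) * t ^ 2 / 2 < φ u - (φ' u / u) * u ^ 2 / 2 := by
  have hu : 0 < u := lt_of_le_of_lt ht htu
  set c := φ' u / u with hc
  set g : ℝ → ℝ := fun s => φ s - c * s ^ 2 / 2 with hg
  have hmono : StrictMonoOn g (Icc t u) := by
    apply strictMonoOn_of_deriv_pos (convex_Icc t u)
    · exact (hcont.mono (fun x hx => le_trans ht hx.1)).sub
        ((continuous_const.mul (continuous_pow 2)).div_const 2).continuousOn
    · intro x hx
      rw [interior_Icc] at hx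
      have hx0 : 0 < x := lt_of_le_of_lt ht hx.1
      have hdg : HasDerivAt g (φ' x - c * x) x := by
        have h1 : HasDerivAt (fun s : ℝ => c * s ^ 2 / 2) (c * x) x := by
          have := ((hasDerivAt_pow 2 x).const_mul c).div_const 2
          simpa using this.congr_deriv (by ring)
        exact (hderiv x hx0).sub h1
      rw [hdg.deriv]
      have hlt : c < φ' x / x := hanti hx0 hu hx.2
      have h2 := mul_lt_mul_of_pos_right hlt hx0
      rw [div_mul_cancel₀ _ hx0.ne'] at h2
      linarith
  have := hmono (left_mem_Icc.mpr htu.le) (right_mem_Icc.mpr htu.le) htu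
  simpa [hg] using this

/-- Proof of Proposition 2.9: f(t) = (a/2)φ'(t)t - aφ(t) satisfies f(0) = 0, is
strictly decreasing on (0,∞), hence negative there. -/
theorem critical_value_negative (a : ℝ) (ha : 0 < a) (φ φ' : ℝ → ℝ)
    (hφ0 : φ 0 = 0)
    (hcont : ContinuousOn φ (Ici 0))
    (hderiv : ∀ t : ℝ, 0 < t → HasDerivAt φ (φ' t) t)
    (hanti : StrictAntiOn (fun t => φ' t / t) (Ioi 0)) :
    (a / 2 * φ' 0 * 0 - a * φ 0 = 0) ∧
      StrictAntiOn (fun t => a / 2 * φ' t * t - a * φ t) (Ioi 0) ∧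
      ∀ ρ : ℝ, 0 < ρ → a / 2 * φ' ρ * ρ - a * φ ρ < 0 := by
  refine ⟨by simp [hφ0], ?_, ?_⟩
  · intro t ht u hu htu
    simp only [mem_Ioi] at ht hu
    have hkey := key_estimate φ φ' hcont hderiv hanti ht.le htu
    have hcu : φ' u * u = (φ' u / u) * u ^ 2 := by field_simp
    have hct : φ' u / u < φ' t / t := hanti ht hu htu
    have hct' : (φ' u / u) * t < φ' t := by
      have h2 := mul_lt_mul_of_pos_right hct ht
      rwa [div_mul_cancel₀ _ ht.ne'] at h2
    nlinarith [mul_pos ha ht]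
  · intro ρ hρ
    have hkey := key_estimate φ φ' hcont hderiv hanti le_rfl hρ
    simp only [hφ0] at hkey
    have hcρ : φ' ρ * ρ = (φ' ρ / ρ) * ρ ^ 2 := by field_simp
    nlinarith
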